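/- Let f(z) = Σ_{n≥0} a_n z^n be analytic on the unit disk with |f(z)| ≤ 1. Then for every n ≥ 0, |a_{2n+1}| ≤ 1 - |a_0|² - |a_1|² - ⋯ - |a_n|². -/

import Mathlib

open Finset ComplexConjugate Filter

noncomputable def om (N : ℕ) : ℂ := Complex.exp (2 * Real.pi * Complex.I / N)

lemma om_prim (N : ℕ) (hN : N ≠ 0) : IsPrimitiveRoot (om N) N :=
  Complex.isPrimitiveRoot_exp N hN

lemma om_norm (N : ℕ) : ‖om N‖ = 1 := by
  have : om N = Complex.exp ((2 * Real.pi / N : ℝ) * Complex.I) := by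
    unfold om; push_cast; ring_nf
  rw [this, Complex.norm_exp_ofReal_mul_I]

lemma mc (z : ℂ) : z * conj z = ((‖z‖ ^ 2 : ℝ) : ℂ) := by
  rw [Complex.mul_conj, Complex.normSq_eq_norm_sq]

lemma om_conj_pow (N k : ℕ) : conj (om N ^ k) = (om N ^ k)⁻¹ := by
  have h1 : ‖om N ^ k‖ = 1 := by rw [norm_pow, om_norm, one_pow]
  have h2 : om N ^ k * conj (om N ^ k) = 1 := by
    rw [Complex.mul_conj]
    norm_cast
    rw [Complex.normSq_eq_norm_sq, h1, one_pow]
  exact eq_inv_of_mul_eq_one_right h2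

lemma orth (N m' m : ℕ) (hN : N ≠ 0) :
    ∑ j ∈ range N, om N ^ (j * m') * conj (om N ^ (j * m)) =
      if (N : ℤ) ∣ (m' : ℤ) - (m : ℤ) then (N : ℂ) else 0 := by
  have hne : om N ≠ 0 := Complex.exp_ne_zero _
  set x : ℂ := om N ^ m' * (om N ^ m)⁻¹ with hx
  have hterm : ∀ j, om N ^ (j * m') * conj (om N ^ (j * m)) = x ^ j := by
    intro j
    rw [om_conj_pow, hx, mul_pow, inv_pow, mul_comm j m', mul_comm j m, pow_mul, pow_mul]
  have hxN : x ^ N = 1 := by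
    rw [hx, mul_pow, inv_pow, ← pow_mul, ← pow_mul, mul_comm m' N, mul_comm m N,
      pow_mul, pow_mul, (om_prim N hN).pow_eq_one, one_pow, one_pow, inv_one, mul_one]
  have hiff : x = 1 ↔ (N : ℤ) ∣ (m' : ℤ) - (m : ℤ) := by
    rw [← (om_prim N hN).zpow_eq_one_iff_dvd]
    rw [sub_eq_add_neg, zpow_add₀ hne, hx]
    rw [zpow_natCast, zpow_neg, zpow_natCast]
  simp only [hterm]
  by_cases h : x = 1
  · rw [if_pos (hiff.mp h)]
    simp [h, Finset.card_range]
  · rw [if_neg (fun hd => h (hiff.mpr hd))]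
    rw [geom_sum_eq h, hxN, sub_self, zero_div]

lemma orth_sum_sq (N L : ℕ) (hN : N ≠ 0) (hL : L ≤ N) (x : ℕ → ℂ) :
    ∑ j ∈ range N, ((∑ l ∈ range L, x l * om N ^ (j * l)) *
        conj (∑ l ∈ range L, x l * om N ^ (j * l))) =
      (N : ℂ) * ∑ l ∈ range L, x l * conj (x l) := by
  have step : ∀ j, (∑ l ∈ range L, x l * om N ^ (j * l)) *
      conj (∑ l ∈ range L, x l * om N ^ (j * l)) =
      ∑ l ∈ range L, ∑ l' ∈ range L,
        x l * conj (x l') * (om N ^ (j * l) * conj (om N ^ (j * l'))) := by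
    intro j
    rw [map_sum, Finset.sum_mul_sum]
    apply Finset.sum_congr rfl; intro l _
    apply Finset.sum_congr rfl; intro l' _
    rw [map_mul]; ring
  simp only [step]
  rw [Finset.sum_comm]
  have swap2 : ∀ l, ∑ j ∈ range N, ∑ l' ∈ range L,
      x l * conj (x l') * (om N ^ (j * l) * conj (om N ^ (j * l'))) =
      ∑ l' ∈ range L, x l * conj (x l') *
        ∑ j ∈ range N, om N ^ (j * l) * conj (om N ^ (j * l')) := by
    intro l
    rw [Finset.sum_comm]
    apply Finset.sum_congr rfl; intro l' _
    rw [Finset.mul_sum]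
  simp only [swap2, orth N _ _ hN]
  rw [Finset.mul_sum]
  apply Finset.sum_congr rfl
  intro l hl
  rw [Finset.sum_eq_single l]
  · rw [if_pos (by simp)]; ring
  · intro l' hl' hne
    rw [if_neg, mul_zero]
    intro hdvd
    have h1 : l < N := lt_of_lt_of_le (mem_range.mp hl) hL
    have h2 : l' < N := lt_of_lt_of_le (mem_range.mp hl') hL
    exfalso
    have hne' : (l : ℤ) - (l' : ℤ) ≠ 0 := by
      intro h; apply hne; exact_mod_cast sub_eq_zero.mp h |>.symm
    have habs : (N : ℤ) ≤ |(l : ℤ) - (l' : ℤ)| :=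
      Int.le_of_dvd (abs_pos.mpr hne') ((dvd_abs _ _).mpr hdvd)
    have hab : |(l : ℤ) - (l' : ℤ)| < N := abs_lt.mpr (by constructor <;> omega)
    linarith
  · intro h; exact absurd hl h

lemma orth_sum_sq_real (N L : ℕ) (hN : N ≠ 0) (hL : L ≤ N) (x : ℕ → ℂ) :
    ∑ j ∈ range N, ‖∑ l ∈ range L, x l * om N ^ (j * l)‖ ^ 2 =
      (N : ℝ) * ∑ l ∈ range L, ‖x l‖ ^ 2 := by
  have h := orth_sum_sq N L hN hL x
  simp only [mc] at h
  exact_mod_cast h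

lemma ghat_hasSum (N : ℕ) (hN : N ≠ 0) (c : ℕ → ℂ) (S : ℕ → ℂ) (r : ℝ)
    (hS : ∀ j, HasSum (fun m' => c m' * ((r : ℂ) * om N ^ j) ^ m') (S j))
    (m : ℕ) (hm : m < N) :
    HasSum (fun k => c (m + k * N) * ((r : ℂ)) ^ (m + k * N))
      ((N : ℂ)⁻¹ * ∑ j ∈ range N, S j * conj (om N ^ (j * m))) := by
  have hNC : (N : ℂ) ≠ 0 := by exact_mod_cast hN
  have h1 : ∀ j ∈ range N,
      HasSum (fun m' => c m' * ((r : ℂ) * om N ^ j) ^ m' * conj (om N ^ (j * m)))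
        (S j * conj (om N ^ (j * m))) := fun j _ => (hS j).mul_right _
  have h2 := (hasSum_sum h1).mul_left (N : ℂ)⁻¹
  have h3 : ∀ m', (N : ℂ)⁻¹ * ∑ j ∈ range N,
        c m' * ((r : ℂ) * om N ^ j) ^ m' * conj (om N ^ (j * m))
      = if (N : ℤ) ∣ (m' : ℤ) - (m : ℤ) then c m' * ((r : ℂ)) ^ m' else 0 := by
    intro m'
    have e1 : ∀ j, c m' * ((r : ℂ) * om N ^ j) ^ m' * conj (om N ^ (j * m))
        = c m' * (r : ℂ) ^ m' * (om N ^ (j * m') * conj (om N ^ (j * m))) := by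
      intro j
      rw [mul_pow, mul_comm j m', pow_mul]
      ring
    rw [Finset.sum_congr rfl (fun j _ => e1 j), ← Finset.mul_sum, orth N m' m hN]
    split_ifs with h
    · field_simp
    · simp
  have h4 := h2.congr_fun (fun m' => (h3 m').symm)
  set F : ℕ → ℂ := fun m' => if (N : ℤ) ∣ (m' : ℤ) - (m : ℤ)
    then c m' * ((r : ℂ)) ^ m' else 0 with hF
  have hinj : Function.Injective (fun k : ℕ => m + k * N) := by
    intro k1 k2 h
    simp only [] at h
    have := Nat.add_left_cancel h
    exact Nat.eq_of_mul_eq_mul_right (Nat.pos_of_ne_zero hN) this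
  have hsupp : ∀ x ∉ Set.range (fun k : ℕ => m + k * N), F x = 0 := by
    intro x hx
    rw [hF]
    simp only []
    rw [if_neg]
    rintro ⟨t, ht⟩
    rcases t with k | k
    · have hxe : (x : ℤ) = ((m + k * N : ℕ) : ℤ) := by
        push_cast
        simp only [Int.ofNat_eq_coe] at ht
        linarith
      have : x = m + k * N := by exact_mod_cast hxe
      exact hx ⟨k, this.symm⟩
    · rw [Int.negSucc_eq] at ht
      have hkN : ((k : ℤ) + 1) * N ≥ (N : ℤ) := by
        have : (0 : ℤ) ≤ (k : ℤ) * N := by positivity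
        linarith [this]
      have hx0 : (0 : ℤ) ≤ (x : ℤ) := Int.natCast_nonneg x
      have hmN : (m : ℤ) < (N : ℤ) := by exact_mod_cast hm
      nlinarith [ht]
  have h5 := (hinj.hasSum_iff hsupp).mpr h4
  refine h5.congr_fun fun k => ?_
  show c (m + k * N) * ((r : ℂ)) ^ (m + k * N) = F ((fun k : ℕ => m + k * N) k)
  rw [hF]
  simp only []
  rw [if_pos ⟨(k : ℤ), by push_cast; ring⟩]

lemma bessel (N M : ℕ) (hN : N ≠ 0) (hM : M ≤ N) (gv : ℕ → ℂ) :
    (N : ℝ) * ∑ m ∈ range M,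
        ‖(N : ℂ)⁻¹ * ∑ j ∈ range N, gv j * conj (om N ^ (j * m))‖ ^ 2 ≤
      ∑ j ∈ range N, ‖gv j‖ ^ 2 := by
  have hNC : (N : ℂ) ≠ 0 := by exact_mod_cast hN
  set Gh : ℕ → ℂ := fun m => (N : ℂ)⁻¹ * ∑ j ∈ range N, gv j * conj (om N ^ (j * m))
    with hGh
  set h : ℕ → ℂ := fun j => ∑ l ∈ range M, Gh l * om N ^ (j * l) with hh
  have key1 : ∑ j ∈ range N, ‖h j‖ ^ 2 = (N : ℝ) * ∑ l ∈ range M, ‖Gh l‖ ^ 2 :=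
    orth_sum_sq_real N M hN hM Gh
  have key2 : ∑ j ∈ range N, (gv j * conj (h j)) = (N : ℂ) * ∑ l ∈ range M, ((‖Gh l‖ ^ 2 : ℝ) : ℂ) := by
    have e1 : ∀ j, gv j * conj (h j) = ∑ l ∈ range M, conj (Gh l) * (gv j * conj (om N ^ (j * l))) := by
      intro j
      rw [hh]
      simp only []
      rw [map_sum, Finset.mul_sum]
      refine Finset.sum_congr rfl fun l _ => ?_
      rw [map_mul]
      ring
    rw [Finset.sum_congr rfl fun j _ => e1 j, Finset.sum_comm]
    have e2 : ∀ l, ∑ j ∈ range N, conj (Gh l) * (gv j * conj (om N ^ (j * l)))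
        = conj (Gh l) * ((N : ℂ) * Gh l) := by
      intro l
      rw [← Finset.mul_sum]
      congr 1
      rw [hGh]
      simp only []
      field_simp
    rw [Finset.sum_congr rfl fun l _ => e2 l, Finset.mul_sum]
    refine Finset.sum_congr rfl fun l _ => ?_
    rw [← mc (Gh l)]
    ring
  have key3 : ∀ j, ‖gv j - h j‖ ^ 2
      = ‖gv j‖ ^ 2 - 2 * (gv j * conj (h j)).re + ‖h j‖ ^ 2 := by
    intro j
    have := Complex.normSq_sub (gv j) (h j)
    simp only [← Complex.sq_norm] at this
    linarith
  have key4 : (∑ j ∈ range N, (gv j * conj (h j))).re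
      = (N : ℝ) * ∑ l ∈ range M, ‖Gh l‖ ^ 2 := by
    rw [key2]
    rw [← Complex.ofReal_sum]
    rw [show ((N : ℂ) * ((∑ l ∈ range M, ‖Gh l‖ ^ 2 : ℝ) : ℂ))
        = (((N : ℝ) * ∑ l ∈ range M, ‖Gh l‖ ^ 2 : ℝ) : ℂ) by push_cast; ring]
    rw [Complex.ofReal_re]
  have pos : (0 : ℝ) ≤ ∑ j ∈ range N, ‖gv j - h j‖ ^ 2 :=
    Finset.sum_nonneg fun j _ => sq_nonneg _
  have expand : ∑ j ∈ range N, ‖gv j - h j‖ ^ 2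
      = ∑ j ∈ range N, ‖gv j‖ ^ 2 - 2 * ((N : ℝ) * ∑ l ∈ range M, ‖Gh l‖ ^ 2)
        + (N : ℝ) * ∑ l ∈ range M, ‖Gh l‖ ^ 2 := by
    rw [Finset.sum_congr rfl fun j _ => key3 j]
    rw [Finset.sum_add_distrib, Finset.sum_sub_distrib]
    rw [key1, ← Finset.mul_sum, ← Complex.re_sum, key4]
  linarith [pos, expand.symm.le, expand.le]

set_option maxHeartbeats 2000000 in
theorem key (f : ℂ → ℂ) (a : ℕ → ℂ)
    (hf : ∀ z : ℂ, ‖z‖ < 1 → HasSum (fun n : ℕ => a n * z ^ n) (f z))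
    (hb : ∀ z : ℂ, ‖z‖ < 1 → ‖f z‖ ≤ 1)
    (d : ℕ) (p : ℕ → ℂ) (hp : ∀ j, d < j → p j = 0) (M : ℕ) :
    ∑ m ∈ range M, ‖∑ j ∈ range (m + 1), p j * a (m - j)‖ ^ 2 ≤
      ∑ j ∈ range (d + 1), ‖p j‖ ^ 2 := by
  set c : ℕ → ℂ := fun m => ∑ j ∈ range (m + 1), p j * a (m - j) with hcdef
  set P : ℂ → ℂ := fun z => ∑ j ∈ range (d + 1), p j * z ^ j with hPdef
  set Kp : ℝ := ∑ j ∈ range (d + 1), ‖p j‖ with hKpdef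
  set RHS : ℝ := ∑ j ∈ range (d + 1), ‖p j‖ ^ 2 with hRHSdef
  have hKp0 : 0 ≤ Kp := Finset.sum_nonneg fun _ _ => norm_nonneg _
  -- partial sums of ‖p‖ are bounded by Kp
  have hKp' : ∀ m : ℕ, ∑ j ∈ range (m + 1), ‖p j‖ ≤ Kp := by
    intro m
    rcases le_or_gt (m + 1) (d + 1) with h | h
    · exact Finset.sum_le_sum_of_subset_of_nonneg (Finset.range_subset_range.mpr h)
        fun _ _ _ => norm_nonneg _
    · apply le_of_eq
      refine (Finset.sum_subset (Finset.range_subset_range.mpr h.le) ?_).symm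
      intro x hx hxd
      rw [hp x (by simp only [Finset.mem_range] at hxd; omega)]
      simp
  -- the Cauchy product
  have hsum : ∀ z : ℂ, ‖z‖ < 1 → HasSum (fun m => c m * z ^ m) (f z * P z) := by
    intro z hz
    have hj : ∀ j ∈ range (d + 1),
        HasSum (fun m => if j ≤ m then p j * a (m - j) * z ^ m else 0)
          (p j * z ^ j * f z) := by
      intro j _
      have h1 : HasSum (fun k => p j * z ^ j * (a k * z ^ k)) (p j * z ^ j * f z) :=
        (hf z hz).mul_left _
      have h2 : HasSum (fun k =>
          (fun m => if j ≤ m then p j * a (m - j) * z ^ m else 0) (k + j))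
          (p j * z ^ j * f z) := by
        refine h1.congr_fun fun k => ?_
        simp only [if_pos (Nat.le_add_left j k), Nat.add_sub_cancel]
        rw [pow_add]; ring
      have h3 := (hasSum_nat_add_iff (f := fun m => if j ≤ m then p j * a (m - j) * z ^ m else 0) j).mp h2
      have hz0 : ∑ i ∈ range j,
          (if j ≤ i then p j * a (i - j) * z ^ i else 0) = 0 :=
        Finset.sum_eq_zero fun i hi => if_neg (by simp only [Finset.mem_range] at hi; omega)
      rwa [hz0, add_zero] at h3
    have H := hasSum_sum hj
    have hfun : ∀ m, ∑ j ∈ range (d + 1),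
        (if j ≤ m then p j * a (m - j) * z ^ m else 0) = c m * z ^ m := by
      intro m
      have e1 : ∑ j ∈ range (d + 1), (if j ≤ m then p j * a (m - j) * z ^ m else 0)
          = ∑ j ∈ range (d + 1 + (m + 1)), (if j ≤ m then p j * a (m - j) * z ^ m else 0) := by
        refine Finset.sum_subset (Finset.range_subset_range.mpr (by omega)) ?_
        intro x hx hxd
        rw [hp x (by simp only [Finset.mem_range] at hxd; omega)]
        simp
      have e2 : c m * z ^ m = ∑ j ∈ range (m + 1), p j * a (m - j) * z ^ m := by
        rw [hcdef]; simp only [Finset.sum_mul]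
      have e3 : ∑ j ∈ range (m + 1), p j * a (m - j) * z ^ m
          = ∑ j ∈ range (m + 1), (if j ≤ m then p j * a (m - j) * z ^ m else 0) :=
        Finset.sum_congr rfl fun j hj =>
          (if_pos (by simp only [Finset.mem_range] at hj; omega)).symm
      have e4 : ∑ j ∈ range (m + 1), (if j ≤ m then p j * a (m - j) * z ^ m else 0)
          = ∑ j ∈ range (d + 1 + (m + 1)), (if j ≤ m then p j * a (m - j) * z ^ m else 0) := by
        refine Finset.sum_subset (Finset.range_subset_range.mpr (by omega)) ?_
        intro x hx hxd
        exact if_neg (by simp only [Finset.mem_range] at hxd; omega)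
      rw [e1, e2, e3, e4]
    have hval : ∑ j ∈ range (d + 1), p j * z ^ j * f z = f z * P z := by
      rw [hPdef]; rw [← Finset.sum_mul]; ring
    rw [hval] at H
    exact H.congr_fun fun m => (hfun m).symm
  -- bound for P on the closed disk
  have hPb : ∀ z : ℂ, ‖z‖ ≤ 1 → ‖P z‖ ≤ Kp := by
    intro z hz
    rw [hPdef, hKpdef]
    refine (norm_sum_le _ _).trans (Finset.sum_le_sum fun j _ => ?_)
    rw [norm_mul, norm_pow]
    calc ‖p j‖ * ‖z‖ ^ j ≤ ‖p j‖ * 1 := by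
          gcongr
          exact pow_le_one₀ (norm_nonneg _) hz
      _ = ‖p j‖ := mul_one _
  show ∑ m ∈ range M, ‖c m‖ ^ 2 ≤ RHS
  -- reduce to radius r < 1
  suffices hr : ∀ r : ℝ, 0 < r → r < 1 →
      ∑ m ∈ range M, (‖c m‖ * r ^ m) ^ 2 ≤ RHS by
    have hcont : Tendsto (fun r : ℝ => ∑ m ∈ range M, (‖c m‖ * r ^ m) ^ 2)
        (nhdsWithin 1 (Set.Iio 1)) (nhds (∑ m ∈ range M, ‖c m‖ ^ 2)) := by
      have hco : Continuous (fun r : ℝ => ∑ m ∈ range M, (‖c m‖ * r ^ m) ^ 2) := by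
        apply continuous_finset_sum
        intro m _
        fun_prop
      have h1 := hco.tendsto 1
      simp only [one_pow, mul_one] at h1
      exact h1.mono_left nhdsWithin_le_nhds
    have hev : ∀ᶠ r in nhdsWithin 1 (Set.Iio 1),
        (fun r : ℝ => ∑ m ∈ range M, (‖c m‖ * r ^ m) ^ 2) r ≤ RHS := by
      filter_upwards [Ioo_mem_nhdsLT_of_mem (show (1:ℝ) ∈ Set.Ioc 0 1 by norm_num)]
        with r hrr
      exact hr r hrr.1 hrr.2
    exact le_of_tendsto hcont hev
  intro r hr0 hr1
  set q : ℝ := Real.sqrt r with hqdef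
  have hq0 : 0 < q := Real.sqrt_pos.mpr hr0
  have hqq : q * q = r := Real.mul_self_sqrt hr0.le
  have hq1 : q < 1 := by nlinarith [Real.sqrt_nonneg r]
  have hrq : r < 1 := hr1
  -- summability at radius q and coefficient bounds
  have hqc : ‖(q : ℂ)‖ < 1 := by
    rw [Complex.norm_real, Real.norm_of_nonneg hq0.le]; exact hq1
  have hsq : Summable (fun k => ‖a k‖ * q ^ k) := by
    have h1 : Summable (fun k => a k * (q : ℂ) ^ k) := (hf _ hqc).summable
    have h2 := summable_norm_iff.mpr h1
    refine h2.congr fun k => ?_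
    rw [norm_mul, norm_pow, Complex.norm_real, Real.norm_of_nonneg hq0.le]
  set Ca : ℝ := ∑' k, ‖a k‖ * q ^ k with hCadef
  have hCa0 : 0 ≤ Ca := tsum_nonneg fun k => by positivity
  have ha : ∀ k, ‖a k‖ * q ^ k ≤ Ca := fun k =>
    Summable.le_tsum hsq k fun j _ => by positivity
  set K : ℝ := Kp * Ca with hKdef
  have hK0 : 0 ≤ K := mul_nonneg hKp0 hCa0
  have hcq : ∀ m, ‖c m‖ * q ^ m ≤ K := by
    intro m
    have h1 : ‖c m‖ ≤ ∑ j ∈ range (m + 1), ‖p j‖ * ‖a (m - j)‖ :=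
      (norm_sum_le _ _).trans (le_of_eq (Finset.sum_congr rfl fun j _ => norm_mul _ _))
    have h2 : ‖c m‖ * q ^ m ≤ ∑ j ∈ range (m + 1), ‖p j‖ * ‖a (m - j)‖ * q ^ m := by
      rw [← Finset.sum_mul]
      exact mul_le_mul_of_nonneg_right h1 (by positivity)
    have h3 : ∀ j ∈ range (m + 1), ‖p j‖ * ‖a (m - j)‖ * q ^ m ≤ ‖p j‖ * Ca := by
      intro j hj
      have hjm : j ≤ m := by simp only [Finset.mem_range] at hj; omega
      have hqm : q ^ m = q ^ j * q ^ (m - j) := by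
        rw [← pow_add]; congr 1; omega
      calc ‖p j‖ * ‖a (m - j)‖ * q ^ m
          = ‖p j‖ * q ^ j * (‖a (m - j)‖ * q ^ (m - j)) := by rw [hqm]; ring
        _ ≤ ‖p j‖ * 1 * Ca := by
            apply mul_le_mul
            · exact mul_le_mul_of_nonneg_left (pow_le_one₀ hq0.le hq1.le) (norm_nonneg _)
            · exact ha _
            · positivity
            · positivity
        _ = ‖p j‖ * Ca := by ring
    calc ‖c m‖ * q ^ m ≤ ∑ j ∈ range (m + 1), ‖p j‖ * ‖a (m - j)‖ * q ^ m := h2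
      _ ≤ ∑ j ∈ range (m + 1), ‖p j‖ * Ca := Finset.sum_le_sum h3
      _ = (∑ j ∈ range (m + 1), ‖p j‖) * Ca := by rw [Finset.sum_mul]
      _ ≤ Kp * Ca := mul_le_mul_of_nonneg_right (hKp' m) hCa0
  have hcr : ∀ m, ‖c m‖ * r ^ m ≤ K * q ^ m := by
    intro m
    have hrm : r ^ m = q ^ m * q ^ m := by rw [← hqq, mul_pow]
    calc ‖c m‖ * r ^ m = ‖c m‖ * q ^ m * q ^ m := by rw [hrm, mul_assoc]
      _ ≤ K * q ^ m := mul_le_mul_of_nonneg_right (hcq m) (by positivity)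
    -- per-N estimate
  have hNstep : ∀ N : ℕ, M ≤ N → d + 1 ≤ N →
      ∑ m ∈ range M, (‖c m‖ * r ^ m) ^ 2 ≤
        RHS + (M : ℝ) * (2 * Kp * (K * q ^ N * (1 - q)⁻¹) + (K * q ^ N * (1 - q)⁻¹) ^ 2) := by
    intro N hMN hdN
    have hNne : N ≠ 0 := by omega
    have hNR : (0 : ℝ) < (N : ℝ) := by exact_mod_cast Nat.pos_of_ne_zero hNne
    have h1q : (0 : ℝ) < 1 - q := by linarith
    set δ : ℝ := K * q ^ N * (1 - q)⁻¹ with hδdef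
    have hδ0 : 0 ≤ δ := by
      apply mul_nonneg (mul_nonneg hK0 (by positivity)) (by positivity)
    have hw1 : ∀ j : ℕ, ‖(r : ℂ) * om N ^ j‖ < 1 := by
      intro j
      rw [norm_mul, norm_pow, om_norm, one_pow, mul_one, Complex.norm_real,
        Real.norm_of_nonneg hr0.le]
      exact hr1
    set gv : ℕ → ℂ := fun j => f ((r : ℂ) * om N ^ j) * P ((r : ℂ) * om N ^ j) with hgv
    have hgS : ∀ j, HasSum (fun m' => c m' * ((r : ℂ) * om N ^ j) ^ m') (gv j) :=
      fun j => hsum _ (hw1 j)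
    have hgb : ∀ j, ‖gv j‖ ≤ Kp := by
      intro j
      rw [hgv]
      simp only [norm_mul]
      calc ‖f ((r : ℂ) * om N ^ j)‖ * ‖P ((r : ℂ) * om N ^ j)‖ ≤ 1 * Kp :=
            mul_le_mul (hb _ (hw1 j)) (hPb _ (hw1 j).le) (norm_nonneg _) zero_le_one
        _ = Kp := one_mul _
    set Gh : ℕ → ℂ := fun m => (N : ℂ)⁻¹ * ∑ j ∈ range N, gv j * conj (om N ^ (j * m))
      with hGh
    have hGhm : ∀ m, Gh m = (N : ℂ)⁻¹ * ∑ j ∈ range N, gv j * conj (om N ^ (j * m)) :=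
      fun m => by rw [hGh]
    have hGhb : ∀ m, ‖Gh m‖ ≤ Kp := by
      intro m
      rw [hGhm m, norm_mul, norm_inv, Complex.norm_natCast]
      have h1 : ‖∑ j ∈ range N, gv j * conj (om N ^ (j * m))‖ ≤ (N : ℝ) * Kp := by
        refine (norm_sum_le _ _).trans ?_
        have hb2 : ∀ j ∈ range N, ‖gv j * conj (om N ^ (j * m))‖ ≤ Kp := by
          intro j _
          rw [norm_mul, RCLike.norm_conj, norm_pow, om_norm, one_pow, mul_one]
          exact hgb j
        calc ∑ j ∈ range N, ‖gv j * conj (om N ^ (j * m))‖ ≤ ∑ _j ∈ range N, Kp :=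
              Finset.sum_le_sum hb2
          _ = (N : ℝ) * Kp := by rw [Finset.sum_const, Finset.card_range, nsmul_eq_mul]
      calc ((N : ℝ))⁻¹ * ‖∑ j ∈ range N, gv j * conj (om N ^ (j * m))‖
          ≤ ((N : ℝ))⁻¹ * ((N : ℝ) * Kp) := mul_le_mul_of_nonneg_left h1 (by positivity)
        _ = Kp := by field_simp
    have hδm : ∀ m, m < N → ‖c m * ((r : ℂ)) ^ m - Gh m‖ ≤ δ := by
      intro m hmN
      have hgh := ghat_hasSum N hNne c gv r hgS m hmN
      rw [← hGhm m] at hgh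
      have e0 : Gh m = (Gh m - c m * ((r : ℂ)) ^ m) +
          ∑ i ∈ range 1, (fun k => c (m + k * N) * ((r : ℂ)) ^ (m + k * N)) i := by
        simp [Finset.sum_range_one]
      have hT : HasSum (fun k => c (m + (k + 1) * N) * ((r : ℂ)) ^ (m + (k + 1) * N))
          (Gh m - c m * ((r : ℂ)) ^ m) := by
        have := (hasSum_nat_add_iff
          (f := fun k => c (m + k * N) * ((r : ℂ)) ^ (m + k * N)) 1).mpr (by rw [← e0]; exact hgh)
        exact this
      have hbound : ∀ k, ‖c (m + (k + 1) * N) * ((r : ℂ)) ^ (m + (k + 1) * N)‖ ≤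
          (K * q ^ N) * q ^ k := by
        intro k
        have hx : ‖c (m + (k + 1) * N) * ((r : ℂ)) ^ (m + (k + 1) * N)‖
            = ‖c (m + (k + 1) * N)‖ * r ^ (m + (k + 1) * N) := by
          rw [norm_mul, norm_pow, Complex.norm_real, Real.norm_of_nonneg hr0.le]
        rw [hx]
        refine (hcr _).trans ?_
        have he : m + (k + 1) * N = N + (m + k * N) := by ring
        rw [he, pow_add, ← mul_assoc]
        have hqk : q ^ (m + k * N) ≤ q ^ k := by
          apply pow_le_pow_of_le_one hq0.le hq1.le
          have : k ≤ k * N := Nat.le_mul_of_pos_right k (Nat.pos_of_ne_zero hNne)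
          omega
        have : (0 : ℝ) ≤ K * q ^ N := mul_nonneg hK0 (by positivity)
        calc K * q ^ N * q ^ (m + k * N) ≤ K * q ^ N * q ^ k :=
              mul_le_mul_of_nonneg_left hqk this
          _ = (K * q ^ N) * q ^ k := by ring
      have hsumm : Summable (fun k => ‖c (m + (k + 1) * N) * ((r : ℂ)) ^ (m + (k + 1) * N)‖) :=
        Summable.of_nonneg_of_le (fun _ => norm_nonneg _) hbound
          ((summable_geometric_of_lt_one hq0.le hq1).mul_left _)
      calc ‖c m * ((r : ℂ)) ^ m - Gh m‖ = ‖Gh m - c m * ((r : ℂ)) ^ m‖ := norm_sub_rev _ _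
        _ = ‖∑' k, c (m + (k + 1) * N) * ((r : ℂ)) ^ (m + (k + 1) * N)‖ := by rw [hT.tsum_eq]
        _ ≤ ∑' k, ‖c (m + (k + 1) * N) * ((r : ℂ)) ^ (m + (k + 1) * N)‖ :=
            norm_tsum_le_tsum_norm hsumm
        _ ≤ ∑' k, (K * q ^ N) * q ^ k := Summable.tsum_le_tsum hbound hsumm
            ((summable_geometric_of_lt_one hq0.le hq1).mul_left _)
        _ = (K * q ^ N) * (1 - q)⁻¹ := by
            rw [tsum_mul_left, tsum_geometric_of_lt_one hq0.le hq1]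
        _ = δ := by rw [hδdef]
    have hbes := bessel N M hNne hMN gv
    have hup : ∑ j ∈ range N, ‖gv j‖ ^ 2 ≤ (N : ℝ) * RHS := by
      have ha2 : ∀ j ∈ range N, ‖gv j‖ ^ 2 ≤ ‖P ((r : ℂ) * om N ^ j)‖ ^ 2 := by
        intro j _
        apply pow_le_pow_left₀ (norm_nonneg _)
        rw [hgv]
        simp only [norm_mul]
        calc ‖f ((r : ℂ) * om N ^ j)‖ * ‖P ((r : ℂ) * om N ^ j)‖
            ≤ 1 * ‖P ((r : ℂ) * om N ^ j)‖ :=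
              mul_le_mul_of_nonneg_right (hb _ (hw1 j)) (norm_nonneg _)
          _ = ‖P ((r : ℂ) * om N ^ j)‖ := one_mul _
      have ePw : ∀ j, P ((r : ℂ) * om N ^ j)
          = ∑ i ∈ range (d + 1), (p i * ((r : ℂ)) ^ i) * om N ^ (j * i) := by
        intro j
        rw [hPdef]
        refine Finset.sum_congr rfl fun i _ => ?_
        rw [mul_pow, mul_comm j i, pow_mul]
        ring
      have hb3 : ∑ j ∈ range N, ‖P ((r : ℂ) * om N ^ j)‖ ^ 2
          = (N : ℝ) * ∑ i ∈ range (d + 1), ‖p i * ((r : ℂ)) ^ i‖ ^ 2 := by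
        rw [Finset.sum_congr rfl fun j _ => by rw [ePw j]]
        exact orth_sum_sq_real N (d + 1) hNne hdN _
      have hb4 : ∑ i ∈ range (d + 1), ‖p i * ((r : ℂ)) ^ i‖ ^ 2 ≤ RHS := by
        rw [hRHSdef]
        refine Finset.sum_le_sum fun i _ => ?_
        rw [norm_mul, norm_pow, Complex.norm_real, Real.norm_of_nonneg hr0.le]
        apply pow_le_pow_left₀ (by positivity)
        calc ‖p i‖ * r ^ i ≤ ‖p i‖ * 1 := by
              apply mul_le_mul_of_nonneg_left (pow_le_one₀ hr0.le hr1.le) (norm_nonneg _)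
          _ = ‖p i‖ := mul_one _
      calc ∑ j ∈ range N, ‖gv j‖ ^ 2 ≤ ∑ j ∈ range N, ‖P ((r : ℂ) * om N ^ j)‖ ^ 2 :=
            Finset.sum_le_sum ha2
        _ = (N : ℝ) * ∑ i ∈ range (d + 1), ‖p i * ((r : ℂ)) ^ i‖ ^ 2 := hb3
        _ ≤ (N : ℝ) * RHS := mul_le_mul_of_nonneg_left hb4 (by positivity)
    have hGhsq : ∑ m ∈ range M, ‖Gh m‖ ^ 2 ≤ RHS := by
      have h2 : (N : ℝ) * ∑ m ∈ range M, ‖Gh m‖ ^ 2 ≤ (N : ℝ) * RHS := by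
        refine le_trans ?_ hup
        have := hbes
        simp only [← hGhm] at this
        exact this
      exact le_of_mul_le_mul_left h2 hNR
    have hterm : ∀ m ∈ range M, (‖c m‖ * r ^ m) ^ 2 ≤ ‖Gh m‖ ^ 2 + (2 * Kp * δ + δ ^ 2) := by
      intro m hm
      have hmN : m < N := lt_of_lt_of_le (Finset.mem_range.mp hm) hMN
      have hnm : ‖c m * ((r : ℂ)) ^ m‖ = ‖c m‖ * r ^ m := by
        rw [norm_mul, norm_pow, Complex.norm_real, Real.norm_of_nonneg hr0.le]
      have h1 : ‖c m‖ * r ^ m ≤ ‖Gh m‖ + δ := by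
        calc ‖c m‖ * r ^ m = ‖c m * ((r : ℂ)) ^ m‖ := hnm.symm
          _ = ‖Gh m + (c m * ((r : ℂ)) ^ m - Gh m)‖ := by rw [add_sub_cancel]
          _ ≤ ‖Gh m‖ + ‖c m * ((r : ℂ)) ^ m - Gh m‖ := norm_add_le _ _
          _ ≤ ‖Gh m‖ + δ := by linarith [hδm m hmN]
      have h2 : (‖c m‖ * r ^ m) ^ 2 ≤ (‖Gh m‖ + δ) ^ 2 :=
        pow_le_pow_left₀ (by positivity) h1 2
      nlinarith [hGhb m, hδ0, norm_nonneg (Gh m)]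
    calc ∑ m ∈ range M, (‖c m‖ * r ^ m) ^ 2
        ≤ ∑ m ∈ range M, (‖Gh m‖ ^ 2 + (2 * Kp * δ + δ ^ 2)) := Finset.sum_le_sum hterm
      _ = (∑ m ∈ range M, ‖Gh m‖ ^ 2) + (M : ℝ) * (2 * Kp * δ + δ ^ 2) := by
          rw [Finset.sum_add_distrib, Finset.sum_const, Finset.card_range, nsmul_eq_mul]
      _ ≤ RHS + (M : ℝ) * (2 * Kp * δ + δ ^ 2) := by linarith [hGhsq]
  -- let N → ∞
  have h1q : (0 : ℝ) < 1 - q := by linarith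
  have hqN : Tendsto (fun N : ℕ => q ^ N) atTop (nhds 0) :=
    tendsto_pow_atTop_nhds_zero_of_lt_one hq0.le hq1
  have hcont2 : Continuous (fun x : ℝ =>
      RHS + (M : ℝ) * (2 * Kp * (K * x * (1 - q)⁻¹) + (K * x * (1 - q)⁻¹) ^ 2)) := by
    fun_prop
  have htend := (hcont2.tendsto 0).comp hqN
  simp only [Function.comp_def, mul_zero, zero_mul, ne_eq, OfNat.ofNat_ne_zero,
    not_false_eq_true, zero_pow, add_zero, mul_zero, zero_mul] at htend
  refine ge_of_tendsto htend ?_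
  refine eventually_atTop.mpr ⟨max M (d + 1), fun N hN => ?_⟩
  exact hNstep N (le_trans (le_max_left _ _) hN) (le_trans (le_max_right _ _) hN)

lemma sum_reflect {β : Type*} [AddCommMonoid β] (n : ℕ) (G : ℕ → β) :
    ∑ j ∈ Finset.Ico (n + 1) (2 * n + 1 + 1), G (2 * n + 1 - j) =
      ∑ i ∈ range (n + 1), G i := by
  refine Finset.sum_bij' (fun j _ => 2 * n + 1 - j) (fun i _ => 2 * n + 1 - i)
    ?_ ?_ ?_ ?_ ?_
  · intro a ha
    simp only [Finset.mem_Ico] at ha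
    simp only [Finset.mem_range]
    omega
  · intro b hb
    simp only [Finset.mem_range] at hb
    simp only [Finset.mem_Ico]
    omega
  · intro a ha
    simp only [Finset.mem_Ico] at ha
    omega
  · intro b hb
    simp only [Finset.mem_range] at hb
    omega
  · intro a _
    rfl

/-- Carlson's lemma, part (a): if `f = Σ aₙ zⁿ` is analytic on the unit disk with
`|f| ≤ 1`, then `|a_{2n+1}| ≤ 1 - |a₀|² - ⋯ - |aₙ|²`. -/
theorem carlson_odd (f : ℂ → ℂ) (a : ℕ → ℂ)
    (hf : ∀ z : ℂ, ‖z‖ < 1 → HasSum (fun n : ℕ => a n * z ^ n) (f z))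
    (hb : ∀ z : ℂ, ‖z‖ < 1 → ‖f z‖ ≤ 1) (n : ℕ) :
    ‖a (2 * n + 1)‖ ≤ 1 - ∑ k ∈ Finset.range (n + 1), ‖a k‖ ^ 2 := by
  set S : ℝ := ∑ k ∈ Finset.range (n + 1), ‖a k‖ ^ 2 with hSdef
  set t : ℝ := ‖a (2 * n + 1)‖ with htdef
  have hS0 : 0 ≤ S := Finset.sum_nonneg fun _ _ => sq_nonneg _
  have ht0 : 0 ≤ t := norm_nonneg _
  obtain ⟨μ, hμ1, hμa⟩ : ∃ μ : ℂ, ‖μ‖ = 1 ∧ a (2 * n + 1) = μ * (t : ℂ) := by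
    by_cases h : a (2 * n + 1) = 0
    · refine ⟨1, norm_one, ?_⟩
      rw [h, htdef, h]
      simp
    · have htpos : (0 : ℝ) < t := by
        rw [htdef]; exact norm_pos_iff.mpr h
      have htC : (t : ℂ) ≠ 0 := by
        simpa using htpos.ne'
      refine ⟨a (2 * n + 1) / (t : ℂ), ?_, ?_⟩
      · rw [norm_div, Complex.norm_real, Real.norm_of_nonneg ht0, ← htdef]
        field_simp
      · exact (div_mul_cancel₀ _ htC).symm
  have main : ∀ ρ : ℝ, 0 ≤ ρ → S + (t + ρ * S) ^ 2 ≤ 1 + ρ ^ 2 * S := by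
    intro ρ hρ
    set p : ℕ → ℂ := fun j => if j = 0 then 1 else
      if n + 1 ≤ j ∧ j ≤ 2 * n + 1 then (ρ : ℂ) * μ * conj (a (2 * n + 1 - j)) else 0
      with hpdef
    have hp0 : ∀ j, 2 * n + 1 < j → p j = 0 := by
      intro j hj
      rw [hpdef]
      simp only []
      rw [if_neg (by omega), if_neg (by omega)]
    have hkey : ∑ m ∈ range (2 * n + 1 + 1), ‖∑ j ∈ range (m + 1), p j * a (m - j)‖ ^ 2 ≤
        ∑ j ∈ range (2 * n + 1 + 1), ‖p j‖ ^ 2 :=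
      key f a hf hb (2 * n + 1) p hp0 (2 * n + 1 + 1)
    -- low coefficients
    have hcm : ∀ m, m ≤ n → (∑ j ∈ range (m + 1), p j * a (m - j)) = a m := by
      intro m hm
      rw [Finset.sum_eq_single 0]
      · rw [hpdef]; simp
      · intro j hj hj0
        rw [hpdef]
        simp only [Finset.mem_range] at hj
        simp only []
        rw [if_neg hj0, if_neg (by omega)]
        simp
      · intro h
        exact absurd (Finset.mem_range.mpr (by omega)) h
    -- the (2n+1)-st coefficient
    have hA : ∑ j ∈ range (n + 1), p j * a (2 * n + 1 - j) = a (2 * n + 1) := by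
      rw [Finset.sum_eq_single 0]
      · rw [hpdef]; simp
      · intro j hj hj0
        rw [hpdef]
        simp only [Finset.mem_range] at hj
        simp only []
        rw [if_neg hj0, if_neg (by omega)]
        simp
      · intro h
        exact absurd (Finset.mem_range.mpr (by omega)) h
    have hB : ∑ j ∈ Finset.Ico (n + 1) (2 * n + 1 + 1), p j * a (2 * n + 1 - j)
        = (ρ : ℂ) * μ * (S : ℂ) := by
      have e1 : ∀ j ∈ Finset.Ico (n + 1) (2 * n + 1 + 1), p j * a (2 * n + 1 - j)
          = (fun i => (ρ : ℂ) * μ * (conj (a i) * a i)) (2 * n + 1 - j) := by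
        intro j hj
        simp only [Finset.mem_Ico] at hj
        rw [hpdef]
        simp only []
        rw [if_neg (by omega), if_pos (by omega)]
        ring
      rw [Finset.sum_congr rfl e1, sum_reflect n (fun i => (ρ : ℂ) * μ * (conj (a i) * a i))]
      have e2 : ∀ i ∈ range (n + 1), (ρ : ℂ) * μ * (conj (a i) * a i)
          = (ρ : ℂ) * μ * ((‖a i‖ ^ 2 : ℝ) : ℂ) := by
        intro i _
        rw [mul_comm (conj (a i)) (a i), mc]
      rw [Finset.sum_congr rfl e2, ← Finset.mul_sum, ← Complex.ofReal_sum]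
    have hc2 : (∑ j ∈ range (2 * n + 1 + 1), p j * a (2 * n + 1 - j))
        = μ * (((t + ρ * S : ℝ)) : ℂ) := by
      rw [← Finset.sum_range_add_sum_Ico (fun j => p j * a (2 * n + 1 - j))
        (show n + 1 ≤ 2 * n + 1 + 1 by omega), hA, hB, hμa]
      push_cast
      ring
    -- norms of the p's
    have hpsq : ∑ j ∈ range (2 * n + 1 + 1), ‖p j‖ ^ 2 = 1 + ρ ^ 2 * S := by
      rw [← Finset.sum_range_add_sum_Ico (fun j => ‖p j‖ ^ 2)
        (show n + 1 ≤ 2 * n + 1 + 1 by omega)]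
      have e1 : ∑ j ∈ range (n + 1), ‖p j‖ ^ 2 = 1 := by
        rw [Finset.sum_eq_single 0]
        · rw [hpdef]; simp
        · intro j hj hj0
          rw [hpdef]
          simp only [Finset.mem_range] at hj
          simp only []
          rw [if_neg hj0, if_neg (by omega)]
          simp
        · intro h
          exact absurd (Finset.mem_range.mpr (by omega)) h
      have e2 : ∑ j ∈ Finset.Ico (n + 1) (2 * n + 1 + 1), ‖p j‖ ^ 2 = ρ ^ 2 * S := by
        have e3 : ∀ j ∈ Finset.Ico (n + 1) (2 * n + 1 + 1), ‖p j‖ ^ 2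
            = (fun i => ρ ^ 2 * ‖a i‖ ^ 2) (2 * n + 1 - j) := by
          intro j hj
          simp only [Finset.mem_Ico] at hj
          rw [hpdef]
          simp only []
          rw [if_neg (by omega), if_pos (by omega)]
          rw [norm_mul, norm_mul, RCLike.norm_conj, hμ1, Complex.norm_real,
            Real.norm_of_nonneg hρ]
          ring
        rw [Finset.sum_congr rfl e3, sum_reflect n (fun i => ρ ^ 2 * ‖a i‖ ^ 2),
          ← Finset.mul_sum, hSdef]
      rw [e1, e2]
    -- assemble
    have hlow : S ≤ ∑ m ∈ range (2 * n + 1), ‖∑ j ∈ range (m + 1), p j * a (m - j)‖ ^ 2 := by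
      have hsub : ∑ m ∈ range (n + 1), ‖∑ j ∈ range (m + 1), p j * a (m - j)‖ ^ 2
          ≤ ∑ m ∈ range (2 * n + 1), ‖∑ j ∈ range (m + 1), p j * a (m - j)‖ ^ 2 :=
        Finset.sum_le_sum_of_subset_of_nonneg
          (Finset.range_subset_range.mpr (by omega)) (fun _ _ _ => sq_nonneg _)
      refine le_trans (le_of_eq ?_) hsub
      rw [hSdef]
      refine Finset.sum_congr rfl fun m hm => ?_
      simp only [Finset.mem_range] at hm
      rw [hcm m (by omega)]
    have hhigh : ‖∑ j ∈ range (2 * n + 1 + 1), p j * a (2 * n + 1 - j)‖ ^ 2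
        = (t + ρ * S) ^ 2 := by
      rw [hc2, norm_mul, hμ1, one_mul, Complex.norm_real,
        Real.norm_of_nonneg (add_nonneg ht0 (mul_nonneg hρ hS0))]
    have hLHS : S + (t + ρ * S) ^ 2
        ≤ ∑ m ∈ range (2 * n + 1 + 1), ‖∑ j ∈ range (m + 1), p j * a (m - j)‖ ^ 2 := by
      rw [Finset.sum_range_succ, hhigh]
      linarith [hlow]
    calc S + (t + ρ * S) ^ 2
        ≤ ∑ m ∈ range (2 * n + 1 + 1), ‖∑ j ∈ range (m + 1), p j * a (m - j)‖ ^ 2 := hLHS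
      _ ≤ ∑ j ∈ range (2 * n + 1 + 1), ‖p j‖ ^ 2 := hkey
      _ = 1 + ρ ^ 2 * S := hpsq
  -- final algebra
  have h0 : S + t ^ 2 ≤ 1 := by
    have := main 0 le_rfl
    simpa using this
  show t ≤ 1 - S
  have hS1 : S ≤ 1 := by nlinarith [sq_nonneg t]
  rcases eq_or_lt_of_le hS1 with hS1' | hS1'
  · have h1 : t ^ 2 ≤ 0 := by nlinarith
    have h2 : t = 0 := by nlinarith
    rw [h2, ← hS1']
    linarith
  · have hu : 0 < 1 - S := by linarith
    have h2 := main (t / (1 - S)) (by positivity)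
    have e : t + t / (1 - S) * S = t / (1 - S) := by
      field_simp
      ring
    rw [e] at h2
    have h3 : (t / (1 - S)) ^ 2 ≤ 1 := by nlinarith [h2]
    have h4 : t ^ 2 ≤ (1 - S) ^ 2 := by
      have e2 : (t / (1 - S)) ^ 2 = t ^ 2 / (1 - S) ^ 2 := by rw [div_pow]
      rw [e2] at h3
      exact (div_le_one (by positivity)).mp h3
    nlinarith [h4, ht0, hu]
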